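/- Let c ∈ ℝ², r_e, r_o > 0, R = r_e + r_o, L_o > 0, and let x_o ∈ ℝ² with ρ' = ‖x_o − c‖ > 0 and polar angle φ' of x_o − c (so x_o − c = ρ'·(cos φ', sin φ')). Assume |ρ' − L_o| ≤ R ≤ ρ' + L_o, and define θ' = arccos((L_o² + ρ'² − R²)/(2·L_o·ρ')), the lower bound θ̲ = φ' + π − θ', and the upper bound θ̄ = φ' + π + θ'. Then for every θ ∈ ℝ: B̄(c, r_e) ∩ B̄(x_o + L_o·u(θ), r_o) ≠ ∅ if and only if there exists an integer m with θ + 2πm ∈ [θ̲, θ̄]. -/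

import Mathlib

open Real Set

/-- Euclidean norm on `ℝ × ℝ`. -/
noncomputable def enorm2 (p : ℝ × ℝ) : ℝ := Real.sqrt (p.1 ^ 2 + p.2 ^ 2)

/-- Closed Euclidean ball in `ℝ × ℝ` with center `c` and radius `r`. -/
noncomputable def cball (c : ℝ × ℝ) (r : ℝ) : Set (ℝ × ℝ) := {p | enorm2 (p - c) ≤ r}

/-- Unit heading vector `u(θ) = (cos θ, sin θ)`. -/
noncomputable def uvec (θ : ℝ) : ℝ × ℝ := (Real.cos θ, Real.sin θ)

/-- Rotation of a point of `ℝ × ℝ` by angle `θ` about the origin. -/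
noncomputable def rot2 (θ : ℝ) (p : ℝ × ℝ) : ℝ × ℝ :=
  (Real.cos θ * p.1 - Real.sin θ * p.2, Real.sin θ * p.1 + Real.cos θ * p.2)

/-- Closed axis-aligned rectangle `[−l/2, l/2] × [−w/2, w/2]`. -/
def Rect (l w : ℝ) : Set (ℝ × ℝ) := Set.Icc (-(l / 2)) (l / 2) ×ˢ Set.Icc (-(w / 2)) (w / 2)

/-- Oriented footprint: image of `Rect l w` under rotation by `θ` followed by translation by `x`. -/
noncomputable def footprint (x : ℝ × ℝ) (θ l w : ℝ) : Set (ℝ × ℝ) :=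
  (fun p => x + rot2 θ p) '' Rect l w

/-- Common radius of the multi-circle cover. -/
noncomputable def circRadius (l w : ℝ) (Nc : ℕ) : ℝ :=
  Real.sqrt ((l / (2 * Nc)) ^ 2 + w ^ 2 / 4)

/-- Spacing of the circle centers of the multi-circle cover. -/
noncomputable def circSpacing (l w : ℝ) (Nc : ℕ) : ℝ :=
  2 * Real.sqrt (circRadius l w Nc ^ 2 - w ^ 2 / 4)

/-- Multi-circle cover of the footprint with configuration `(x, θ)`:
`N_c` closed balls of radius `circRadius` centered at `x + L_i • u(θ)` with
`L_i = (2i − N_c − 1) d_c / 2`, `i = 1, …, N_c`. -/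
noncomputable def multiCircle (x : ℝ × ℝ) (θ l w : ℝ) (Nc : ℕ) : Set (ℝ × ℝ) :=
  ⋃ i ∈ Finset.Icc 1 Nc,
    cball (x + ((2 * (i : ℝ) - Nc - 1) * circSpacing l w Nc / 2) • uvec θ)
      (circRadius l w Nc)


lemma enorm2_neg (p : ℝ × ℝ) : enorm2 (-p) = enorm2 p := by
  simp [enorm2]

lemma enorm2_smul (s : ℝ) (p : ℝ × ℝ) : enorm2 (s • p) = |s| * enorm2 p := by
  simp only [enorm2, Prod.smul_fst, Prod.smul_snd, smul_eq_mul]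
  rw [show (s*p.1)^2 + (s*p.2)^2 = s^2 * (p.1^2+p.2^2) by ring,
      Real.sqrt_mul (sq_nonneg s), Real.sqrt_sq_eq_abs]

lemma enorm2_triangle (p q : ℝ × ℝ) : enorm2 (p + q) ≤ enorm2 p + enorm2 q := by
  unfold enorm2
  set A := Real.sqrt (p.1^2+p.2^2) with hA
  set B := Real.sqrt (q.1^2+q.2^2) with hB
  have hA0 : 0 ≤ A := Real.sqrt_nonneg _
  have hB0 : 0 ≤ B := Real.sqrt_nonneg _
  have hA2 : A^2 = p.1^2+p.2^2 := Real.sq_sqrt (by positivity)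
  have hB2 : B^2 = q.1^2+q.2^2 := Real.sq_sqrt (by positivity)
  have key : p.1*q.1 + p.2*q.2 ≤ A*B := by
    nlinarith [sq_nonneg (p.1*q.2 - p.2*q.1), mul_nonneg hA0 hB0,
      sq_nonneg (A*B - (p.1*q.1+p.2*q.2)), sq_nonneg (A*B + (p.1*q.1+p.2*q.2))]
  have hle : ((p+q).1)^2 + ((p+q).2)^2 ≤ (A+B)^2 := by
    simp only [Prod.fst_add, Prod.snd_add]; nlinarith
  calc Real.sqrt (((p+q).1)^2+((p+q).2)^2) ≤ Real.sqrt ((A+B)^2) := Real.sqrt_le_sqrt hle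
    _ = A + B := Real.sqrt_sq (by positivity)

lemma sqrt_le_iff' {s R : ℝ} (hs : 0 ≤ s) (hR : 0 ≤ R) : Real.sqrt s ≤ R ↔ s ≤ R^2 := by
  constructor
  · intro h
    calc s = (Real.sqrt s)^2 := (Real.sq_sqrt hs).symm
      _ ≤ R^2 := by gcongr
  · intro h
    calc Real.sqrt s ≤ Real.sqrt (R^2) := Real.sqrt_le_sqrt h
      _ = R := Real.sqrt_sq hR

lemma cball_inter (a b : ℝ × ℝ) (ra rb : ℝ) (hra : 0 ≤ ra) (hrb : 0 ≤ rb)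
    (hpos : 0 < ra + rb) :
    (cball a ra ∩ cball b rb).Nonempty ↔ enorm2 (b - a) ≤ ra + rb := by
  constructor
  · rintro ⟨p, hp1, hp2⟩
    have heq : b - a = -(p - b) + (p - a) := by abel
    calc enorm2 (b-a) = enorm2 (-(p-b) + (p-a)) := by rw [← heq]
      _ ≤ enorm2 (-(p-b)) + enorm2 (p-a) := enorm2_triangle _ _
      _ = enorm2 (p-b) + enorm2 (p-a) := by rw [enorm2_neg]
      _ ≤ rb + ra := add_le_add hp2 hp1
      _ = ra + rb := by ring
  · intro h
    set t : ℝ := ra/(ra+rb) with ht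
    have ht0 : 0 ≤ t := by positivity
    have ht1 : t ≤ 1 := by
      rw [ht, div_le_one hpos]; linarith
    refine ⟨a + t • (b - a), ?_, ?_⟩
    · show enorm2 (a + t • (b-a) - a) ≤ ra
      rw [add_sub_cancel_left, enorm2_smul, abs_of_nonneg ht0]
      calc t * enorm2 (b-a) ≤ t * (ra+rb) := by
            apply mul_le_mul_of_nonneg_left h ht0
        _ = ra := div_mul_cancel₀ ra (ne_of_gt hpos)
    · show enorm2 (a + t • (b-a) - b) ≤ rb
      have heq : a + t • (b-a) - b = (t-1) • (b-a) := by
        have : (t-1) • (b-a) = t • (b-a) - (b-a) := by rw [sub_smul, one_smul]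
        rw [this]; abel
      rw [heq, enorm2_smul, abs_of_nonpos (by linarith), neg_sub]
      calc (1-t) * enorm2 (b-a) ≤ (1-t) * (ra+rb) := by
            apply mul_le_mul_of_nonneg_left h (by linarith)
        _ = rb := by
            rw [ht]
            field_simp
            ring


lemma cos_le_iff_mem_interval (α θ' : ℝ) (h0 : 0 ≤ θ') (hπ : θ' ≤ π) :
    Real.cos α ≤ -Real.cos θ' ↔
      ∃ m : ℤ, α + 2 * π * m ∈ Set.Icc (π - θ') (π + θ') := by
  rw [← Real.cos_pi_sub]
  constructor
  · intro h
    set k : ℤ := ⌊(α + π) / (2 * π)⌋ with hk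
    set β : ℝ := α - 2 * π * k with hβ
    have h2π : (0:ℝ) < 2 * π := by positivity
    have hfl : (k:ℝ) ≤ (α + π) / (2 * π) := Int.floor_le _
    have hfl' : (α + π) / (2 * π) < k + 1 := Int.lt_floor_add_one _
    have hβlo : -π ≤ β := by
      rw [hβ]
      have := (le_div_iff₀ h2π).mp hfl
      linarith [this]
    have hβhi : β < π := by
      rw [hβ]
      have := (div_lt_iff₀ h2π).mp hfl'
      nlinarith [this]
    have hcosβ : Real.cos β = Real.cos α := by
      have := Real.cos_add_int_mul_two_pi α (-k)
      rw [hβ, show α - 2 * π * (k:ℝ) = α + ((-k : ℤ):ℝ) * (2 * π) by push_cast; ring, this]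
    by_cases hb : 0 ≤ β
    · refine ⟨-k, ?_⟩
      have hmem : α + 2 * π * ((-k : ℤ) : ℝ) = β := by rw [hβ]; push_cast; ring
      rw [hmem, Set.mem_Icc]
      constructor
      · by_contra hlt
        push_neg at hlt
        have := Real.cos_lt_cos_of_nonneg_of_le_pi hb (by linarith) hlt
        rw [hcosβ] at this; linarith
      · linarith
    · push_neg at hb
      refine ⟨-k + 1, ?_⟩
      have hmem : α + 2 * π * ((-k + 1 : ℤ) : ℝ) = β + 2 * π := by rw [hβ]; push_cast; ring
      rw [hmem, Set.mem_Icc]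
      have hnb : π - θ' ≤ -β := by
        by_contra hlt
        push_neg at hlt
        have := Real.cos_lt_cos_of_nonneg_of_le_pi (by linarith : (0:ℝ) ≤ -β)
          (by linarith) hlt
        rw [Real.cos_neg, hcosβ] at this; linarith
      constructor <;> [linarith; linarith]
  · rintro ⟨m, hm⟩
    rw [Set.mem_Icc] at hm
    have hcos : Real.cos α = Real.cos (α + 2 * π * m) := by
      have : α + 2 * π * m = α + (m:ℝ) * (2 * π) := by ring
      rw [this, Real.cos_add_int_mul_two_pi]
    rw [hcos]
    set β := α + 2 * π * m
    by_cases hb : β ≤ π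
    · exact Real.cos_le_cos_of_nonneg_of_le_pi (by linarith) hb hm.1
    · push_neg at hb
      have : Real.cos β = Real.cos (2 * π - β) := by
        rw [Real.cos_sub]; simp
      rw [this]
      exact Real.cos_le_cos_of_nonneg_of_le_pi (by linarith) (by linarith)
        (by linarith [Real.pi_pos])

/-- Heading-angle intersection interval: under `|ρ' − L_o| ≤ R ≤ ρ' + L_o`, with
`θ' = arccos((L_o² + ρ'² − R²)/(2 L_o ρ'))`, `θ̲ = φ' + π − θ'` and `θ̄ = φ' + π + θ'`,
the ego circle `B̄(c, r_e)` and the offset object circle `B̄(x_o + L_o·u(θ), r_o)`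
intersect iff `θ` lies in `[θ̲, θ̄]` modulo `2π`. -/
theorem contact_angle_interval
    (c xo : ℝ × ℝ) (re ro Lo ρ' φ' : ℝ)
    (hre : 0 < re) (hro : 0 < ro) (hLo : 0 < Lo)
    (hρdef : ρ' = enorm2 (xo - c)) (hρpos : 0 < ρ')
    (hφ : xo - c = ρ' • (Real.cos φ', Real.sin φ'))
    (h1 : |ρ' - Lo| ≤ re + ro) (h2 : re + ro ≤ ρ' + Lo) :
    ∀ θ : ℝ,
      (cball c re ∩ cball (xo + Lo • uvec θ) ro).Nonempty ↔
      ∃ m : ℤ, θ + 2 * π * m ∈ Set.Icc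
        (φ' + π - Real.arccos ((Lo ^ 2 + ρ' ^ 2 - (re + ro) ^ 2) / (2 * Lo * ρ')))
        (φ' + π + Real.arccos ((Lo ^ 2 + ρ' ^ 2 - (re + ro) ^ 2) / (2 * Lo * ρ'))) := by
  intro θ
  set R : ℝ := re + ro with hR
  have hRpos : 0 < R := by positivity
  set t : ℝ := (Lo ^ 2 + ρ' ^ 2 - R ^ 2) / (2 * Lo * ρ') with htdef
  have hden : (0:ℝ) < 2 * Lo * ρ' := by positivity
  have habs : (ρ' - Lo)^2 ≤ R^2 := by
    have := abs_nonneg (ρ' - Lo)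
    nlinarith [sq_abs (ρ' - Lo)]
  have ht1 : -1 ≤ t := by
    rw [htdef, le_div_iff₀ hden]; nlinarith
  have ht2 : t ≤ 1 := by
    rw [htdef, div_le_one hden]; nlinarith
  set θ' : ℝ := Real.arccos t with hθ'
  have hcosθ' : Real.cos θ' = t := Real.cos_arccos ht1 ht2
  have hθ'0 : 0 ≤ θ' := Real.arccos_nonneg t
  have hθ'π : θ' ≤ π := Real.arccos_le_pi t
  -- the center difference
  have hv : xo + Lo • uvec θ - c = (ρ' * Real.cos φ' + Lo * Real.cos θ,
      ρ' * Real.sin φ' + Lo * Real.sin θ) := by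
    have : xo + Lo • uvec θ - c = (xo - c) + Lo • uvec θ := by abel
    rw [this, hφ, uvec, Prod.smul_mk, Prod.smul_mk, Prod.mk_add_mk,
      smul_eq_mul, smul_eq_mul, smul_eq_mul, smul_eq_mul]
  -- squared norm of center difference
  have hsq : (ρ' * Real.cos φ' + Lo * Real.cos θ)^2 +
      (ρ' * Real.sin φ' + Lo * Real.sin θ)^2
      = ρ'^2 + Lo^2 + 2 * Lo * ρ' * Real.cos (θ - φ') := by
    rw [Real.cos_sub]
    nlinarith [Real.sin_sq_add_cos_sq θ, Real.sin_sq_add_cos_sq φ']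
  rw [cball_inter c (xo + Lo • uvec θ) re ro hre.le hro.le hRpos]
  have hiff : enorm2 (xo + Lo • uvec θ - c) ≤ R ↔ Real.cos (θ - φ') ≤ -Real.cos θ' := by
    rw [hv, enorm2, sqrt_le_iff' (by positivity) hRpos.le, hsq, hcosθ', htdef]
    rw [show -((Lo ^ 2 + ρ' ^ 2 - R ^ 2) / (2 * Lo * ρ'))
        = (R ^ 2 - Lo ^ 2 - ρ' ^ 2) / (2 * Lo * ρ') by ring]
    rw [le_div_iff₀ hden]
    constructor <;> intro h <;> nlinarith
  rw [hiff, cos_le_iff_mem_interval (θ - φ') θ' hθ'0 hθ'π]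
  constructor <;> rintro ⟨m, hm⟩ <;> rw [Set.mem_Icc] at hm <;>
    exact ⟨m, Set.mem_Icc.mpr ⟨by linarith [hm.1], by linarith [hm.2]⟩⟩
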